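/- Amplitude bound when a is even: let F : ℝ → ℝ be real analytic with F(0) = 0 and F′(0) = −c for some c > 0, and let B ∈ ℝ. Let φ̄₊ > 0 satisfy F′(φ̄₊) = 0 and F′(s) ≠ 0 for all 0 < s < φ̄₊, and suppose a := min{n ≥ 2 : F^{(n)}(φ̄₊) ≠ 0} exists and is even. Then every continuous 2π-periodic function φ : ℝ → ℝ with zero mean satisfying F(φ(x)) = −(K∗φ)(x) + B for all x ∈ ℝ satisfies φ(x) ≤ φ̄₊ for all x ∈ ℝ. -/

import Mathlib

open Real MeasureTheory Filter
open scoped ContDiff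

/-- The 2π-periodic kernel of `D⁻²`, equal to `(1/(4π))(|x|−π)² − π/12` on `[−π,π]`. -/
noncomputable def Kper (x : ℝ) : ℝ :=
  (1 / (4 * π)) * (|x - 2 * π * ((round (x / (2 * π)) : ℤ) : ℝ)| - π) ^ 2 - π / 12

/-- Periodic convolution with the kernel `Kper`. -/
noncomputable def Kconv (φ : ℝ → ℝ) (x : ℝ) : ℝ :=
  ∫ y in (-π)..π, Kper (x - y) * φ y

lemma Kper_eq (x : ℝ) :
    Kper x = π * ((Int.fract (x / (2 * π))) ^ 2 - Int.fract (x / (2 * π))) + π / 6 := by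
  have hπ := Real.pi_pos
  set t := x / (2 * π) with ht
  have hx : x = 2 * π * t := by rw [ht]; field_simp
  have h1 : |x - 2 * π * ((round t : ℤ) : ℝ)| = 2 * π * |t - round t| := by
    rw [hx, ← mul_sub, abs_mul, abs_of_pos (by positivity : (0:ℝ) < 2*π)]
  unfold Kper
  rw [← ht, h1, abs_sub_round_eq_min]
  rcases min_cases (Int.fract t) (1 - Int.fract t) with ⟨h, _⟩ | ⟨h, _⟩ <;> rw [h] <;>
    field_simp <;> ring

lemma Kper_cont : Continuous Kper := by
  have h : Continuous ((fun s : ℝ => π * (s ^ 2 - s) + π / 6) ∘ Int.fract) :=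
    ContinuousOn.comp_fract'' (Continuous.continuousOn (by continuity)) (by norm_num)
  exact (h.comp (continuous_id.div_const (2 * π))).congr fun x => (Kper_eq x).symm

lemma Kper_periodic : Function.Periodic Kper (2 * π) := by
  have hπ := Real.pi_pos
  intro x
  rw [Kper_eq, Kper_eq]
  have h : (x + 2 * π) / (2 * π) = x / (2 * π) + 1 := by field_simp
  rw [h, Int.fract_add_one]

lemma Kper_eval {u : ℝ} (h1 : -π ≤ u) (h2 : u ≤ π) :
    Kper u = (1 / (4 * π)) * (|u| - π) ^ 2 - π / 12 := by
  have hπ := Real.pi_pos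
  rw [Kper_eq]
  rcases le_or_gt 0 u with hu | hu
  · have hf : Int.fract (u / (2 * π)) = u / (2 * π) := by
      refine Int.fract_eq_self.2 ⟨by positivity, ?_⟩
      rw [div_lt_one (by positivity)]; linarith
    rw [hf, abs_of_nonneg hu]; field_simp; ring
  · have hf : Int.fract (u / (2 * π)) = u / (2 * π) + 1 := by
      rw [← Int.fract_add_one]
      refine Int.fract_eq_self.2 ⟨?_, ?_⟩
      · have : (-1 : ℝ) / 2 ≤ u / (2 * π) := by
          rw [div_le_div_iff₀ (by norm_num) (by positivity)]; nlinarith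
        linarith
      · have : u / (2 * π) < 0 := div_neg_of_neg_of_pos hu (by positivity)
        linarith
    rw [hf, abs_of_neg hu]; field_simp; ring

noncomputable def mom (φ : ℝ → ℝ) (k : ℕ) (x : ℝ) : ℝ := ∫ y in (0:ℝ)..x, y ^ k * φ y

lemma mom_hasDeriv {φ : ℝ → ℝ} (hφc : Continuous φ) (k : ℕ) (x : ℝ) :
    HasDerivAt (mom φ k) (x ^ k * φ x) x :=
  (((continuous_pow k).mul hφc).integral_hasStrictDerivAt 0 x).hasDerivAt

lemma mom_int {φ : ℝ → ℝ} (hφc : Continuous φ) (k : ℕ) (a b : ℝ) :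
    IntervalIntegrable (fun y => y ^ k * φ y) volume a b :=
  ((continuous_pow k).mul hφc).intervalIntegrable a b

lemma mom_sub {φ : ℝ → ℝ} (hφc : Continuous φ) (k : ℕ) (a b : ℝ) :
    mom φ k b - mom φ k a = ∫ y in a..b, y ^ k * φ y :=
  intervalIntegral.integral_interval_sub_left (mom_int hφc k 0 b) (mom_int hφc k 0 a)

lemma poly_integral {φ : ℝ → ℝ} (hφc : Continuous φ) (a b c0 c1 c2 : ℝ) :
    ∫ y in a..b, (c0 * (y ^ 0 * φ y) + c1 * (y ^ 1 * φ y) + c2 * (y ^ 2 * φ y)) =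
      c0 * (mom φ 0 b - mom φ 0 a) + c1 * (mom φ 1 b - mom φ 1 a)
        + c2 * (mom φ 2 b - mom φ 2 a) := by
  have hik : ∀ (k : ℕ) (c : ℝ), IntervalIntegrable (fun y => c * (y ^ k * φ y)) volume a b :=
    fun k c => (mom_int hφc k a b).const_mul c
  rw [intervalIntegral.integral_add ((hik 0 c0).add (hik 1 c1)) (hik 2 c2),
    intervalIntegral.integral_add (hik 0 c0) (hik 1 c1),
    intervalIntegral.integral_const_mul, intervalIntegral.integral_const_mul,
    intervalIntegral.integral_const_mul, mom_sub hφc, mom_sub hφc, mom_sub hφc]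

lemma mom_window {φ : ℝ → ℝ} (hφc : Continuous φ) (hper : Function.Periodic φ (2 * π))
    (h0 : (∫ y in (-π)..π, φ y) = 0) (x : ℝ) : mom φ 0 (x + π) - mom φ 0 (x - π) = 0 := by
  have h1 : mom φ 0 (x + π) - mom φ 0 (x - π) = ∫ y in (x - π)..(x + π), φ y := by
    rw [mom_sub hφc]
    exact intervalIntegral.integral_congr fun y _ => by simp
  rw [h1]
  have h2 := hper.intervalIntegral_add_eq (x - π) (-π)
  rw [show x - π + 2 * π = x + π from by ring, show -π + 2 * π = π from by ring] at h2
  rw [h2, h0]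

noncomputable def Pfun (φ : ℝ → ℝ) (x : ℝ) : ℝ :=
  (x - π) ^ 2 * (mom φ 0 x - mom φ 0 (x - π)) - 2 * (x - π) * (mom φ 1 x - mom φ 1 (x - π))
    + (mom φ 2 (x + π) - mom φ 2 (x - π))
    - 2 * (x + π) * (mom φ 1 (x + π) - mom φ 1 x)
    + (x + π) ^ 2 * (mom φ 0 (x + π) - mom φ 0 x)

noncomputable def P1 (φ : ℝ → ℝ) (x : ℝ) : ℝ :=
  2 * (x - π) * (mom φ 0 x - mom φ 0 (x - π)) - 2 * (mom φ 1 x - mom φ 1 (x - π))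
    + 2 * (x + π) * (mom φ 0 (x + π) - mom φ 0 x) - 2 * (mom φ 1 (x + π) - mom φ 1 x)

lemma Kconv_eq {φ : ℝ → ℝ} (hφc : Continuous φ) (hper : Function.Periodic φ (2 * π))
    (h0 : (∫ y in (-π)..π, φ y) = 0) (x : ℝ) :
    Kconv φ x = (1 / (4 * π)) * Pfun φ x := by
  have hπ := Real.pi_pos
  -- the integrand is periodic in y
  have hp : Function.Periodic (fun y => Kper (x - y) * φ y) (2 * π) := by
    intro y
    show Kper (x - (y + 2 * π)) * φ (y + 2 * π) = Kper (x - y) * φ y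
    rw [show x - (y + 2 * π) = x - y - 2 * π from by ring, Kper_periodic.sub_eq, hper y]
  -- shift the window
  have step1 : Kconv φ x = ∫ y in (x - π)..(x + π), Kper (x - y) * φ y := by
    have h2 := hp.intervalIntegral_add_eq (-π) (x - π)
    rw [show -π + 2 * π = π from by ring, show x - π + 2 * π = x + π from by ring] at h2
    exact h2
  -- split at x
  have hil : IntervalIntegrable (fun y => Kper (x - y) * φ y) volume (x - π) x :=
    ((Kper_cont.comp (continuous_const.sub continuous_id)).mul hφc).intervalIntegrable _ _
  have hir : IntervalIntegrable (fun y => Kper (x - y) * φ y) volume x (x + π) :=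
    ((Kper_cont.comp (continuous_const.sub continuous_id)).mul hφc).intervalIntegrable _ _
  have step2 : Kconv φ x = (∫ y in (x - π)..x, Kper (x - y) * φ y)
      + ∫ y in x..(x + π), Kper (x - y) * φ y := by
    rw [step1, intervalIntegral.integral_add_adjacent_intervals hil hir]
  -- left piece
  have left1 : (∫ y in (x - π)..x, Kper (x - y) * φ y)
      = ∫ y in (x - π)..x, (((1 / (4 * π)) * (x - π) ^ 2 - π / 12) * (y ^ 0 * φ y)
          + (-(1 / (2 * π)) * (x - π)) * (y ^ 1 * φ y) + (1 / (4 * π)) * (y ^ 2 * φ y)) := by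
    apply intervalIntegral.integral_congr
    intro y hy
    rw [Set.uIcc_of_le (by linarith : x - π ≤ x)] at hy
    obtain ⟨hy1, hy2⟩ := hy
    show Kper (x - y) * φ y = _
    have hu1 : (0:ℝ) ≤ x - y := by linarith
    have hu2 : x - y ≤ π := by linarith
    rw [Kper_eval (by linarith) hu2, abs_of_nonneg hu1]
    field_simp
    ring
  have right1 : (∫ y in x..(x + π), Kper (x - y) * φ y)
      = ∫ y in x..(x + π), (((1 / (4 * π)) * (x + π) ^ 2 - π / 12) * (y ^ 0 * φ y)
          + (-(1 / (2 * π)) * (x + π)) * (y ^ 1 * φ y) + (1 / (4 * π)) * (y ^ 2 * φ y)) := by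
    apply intervalIntegral.integral_congr
    intro y hy
    rw [Set.uIcc_of_le (by linarith : x ≤ x + π)] at hy
    obtain ⟨hy1, hy2⟩ := hy
    show Kper (x - y) * φ y = _
    have hu1 : x - y ≤ 0 := by linarith
    have hu2 : -π ≤ x - y := by linarith
    rw [Kper_eval hu2 (by linarith), abs_of_nonpos hu1]
    field_simp
    ring
  have hwin := mom_window hφc hper h0 x
  rw [step2, left1, right1, poly_integral hφc, poly_integral hφc]
  unfold Pfun
  linear_combination (-(π / 12)) * hwin

lemma Pfun_hasDeriv {φ : ℝ → ℝ} (hφc : Continuous φ) (x : ℝ) :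
    HasDerivAt (Pfun φ) (P1 φ x) x := by
  have hm := mom_hasDeriv hφc
  have hmm : ∀ k : ℕ, HasDerivAt (fun x => mom φ k (x - π)) ((x - π) ^ k * φ (x - π)) x := by
    intro k
    simpa [Function.comp_def] using (hm k (x - π)).comp x ((hasDerivAt_id x).sub_const π)
  have hmp : ∀ k : ℕ, HasDerivAt (fun x => mom φ k (x + π)) ((x + π) ^ k * φ (x + π)) x := by
    intro k
    simpa [Function.comp_def] using (hm k (x + π)).comp x ((hasDerivAt_id x).add_const π)
  have H := (((((hasDerivAt_id x).sub_const π).pow 2).mul ((hm 0 x).sub (hmm 0))).sub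
      ((((hasDerivAt_id x).sub_const π).const_mul 2).mul ((hm 1 x).sub (hmm 1)))).add
      (((hmp 2).sub (hmm 2))) |>.sub
      ((((hasDerivAt_id x).add_const π).const_mul 2).mul ((hmp 1).sub (hm 1 x))) |>.add
      ((((hasDerivAt_id x).add_const π).pow 2).mul ((hmp 0).sub (hm 0 x)))
  refine H.congr_deriv (Eq.symm ?_)
  unfold P1
  simp only [id_eq, Pi.sub_apply, Pi.pow_apply, Pi.mul_apply]
  push_cast
  ring

lemma P1_hasDeriv {φ : ℝ → ℝ} (hφc : Continuous φ) (hper : Function.Periodic φ (2 * π))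
    (h0 : (∫ y in (-π)..π, φ y) = 0) (x : ℝ) :
    HasDerivAt (P1 φ) (-(4 * π) * φ x) x := by
  have hm := mom_hasDeriv hφc
  have hmm : ∀ k : ℕ, HasDerivAt (fun x => mom φ k (x - π)) ((x - π) ^ k * φ (x - π)) x := by
    intro k
    simpa [Function.comp_def] using (hm k (x - π)).comp x ((hasDerivAt_id x).sub_const π)
  have hmp : ∀ k : ℕ, HasDerivAt (fun x => mom φ k (x + π)) ((x + π) ^ k * φ (x + π)) x := by
    intro k
    simpa [Function.comp_def] using (hm k (x + π)).comp x ((hasDerivAt_id x).add_const π)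
  have H := (((((hasDerivAt_id x).sub_const π).const_mul 2).mul ((hm 0 x).sub (hmm 0))).sub
      (((hm 1 x).sub (hmm 1)).const_mul 2)).add
      ((((hasDerivAt_id x).add_const π).const_mul 2).mul ((hmp 0).sub (hm 0 x))) |>.sub
      (((hmp 1).sub (hm 1 x)).const_mul 2)
  refine H.congr_deriv (Eq.symm ?_)
  have hwin := mom_window hφc hper h0 x
  simp only [id_eq, Pi.sub_apply, Pi.pow_apply, Pi.mul_apply]
  linear_combination (-2 : ℝ) * hwin

lemma itDW_eq {G : ℝ → ℝ} (hG : ContDiff ℝ ∞ G) {s : Set ℝ} (hs : UniqueDiffOn ℝ s) :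
    ∀ (n : ℕ), ∀ x ∈ s, iteratedDerivWithin n G s x = iteratedDeriv n G x := by
  intro n
  induction n with
  | zero => intro x hx; simp
  | succ n ih =>
    intro x hx
    rw [iteratedDerivWithin_succ, iteratedDeriv_succ]
    rw [derivWithin_congr (fun y hy => ih y hy) (ih x hx)]
    exact ((hG.differentiable_iteratedDeriv n (by exact_mod_cast lt_top_iff_ne_top.2 (by simp)))
      x).derivWithin (hs x hx)

lemma taylor_smooth {G : ℝ → ℝ} (hG : ContDiff ℝ ∞ G) {x₀ x : ℝ} (hx : x₀ < x) (n : ℕ)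
    (hv : ∀ m, m ≤ n → iteratedDeriv m G x₀ = 0) :
    ∃ ξ ∈ Set.Ioo x₀ x, G x = iteratedDeriv (n + 1) G ξ * (x - x₀) ^ (n + 1) / (Nat.factorial (n + 1)) := by
  have hs : UniqueDiffOn ℝ (Set.Icc x₀ x) := uniqueDiffOn_Icc hx
  have heqd := itDW_eq hG hs
  have hdiff : DifferentiableOn ℝ (iteratedDerivWithin n G (Set.Icc x₀ x)) (Set.Ioo x₀ x) := by
    intro y hy
    have h1 : DifferentiableAt ℝ (iteratedDeriv n G) y :=
      (hG.differentiable_iteratedDeriv n (by exact_mod_cast lt_top_iff_ne_top.2 (by simp))) y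
    exact (h1.differentiableWithinAt.congr
      (fun z hz => heqd n z (Set.Ioo_subset_Icc_self hz)) (heqd n y (Set.Ioo_subset_Icc_self hy)))
  obtain ⟨ξ, hξ, hT⟩ := taylor_mean_remainder_lagrange hx.ne
    ((hG.of_le (by exact_mod_cast le_top)).contDiffOn)
    (by rwa [Set.uIcc_of_le hx.le, Set.uIoo_of_le hx.le])
  rw [Set.uIoo_of_le hx.le] at hξ
  rw [Set.uIcc_of_le hx.le] at hT
  refine ⟨ξ, hξ, ?_⟩
  have hzero : taylorWithinEval G n (Set.Icc x₀ x) x₀ x = 0 := by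
    rw [taylor_within_apply]
    refine Finset.sum_eq_zero fun k hk => ?_
    rw [heqd k x₀ (Set.left_mem_Icc.2 hx.le), hv k (Nat.lt_succ_iff.1 (Finset.mem_range.1 hk))]
    simp
  rw [hzero, sub_zero] at hT
  rw [hT, heqd (n + 1) ξ (Set.Ioo_subset_Icc_self hξ)]

lemma deriv_F_pos_right {F : ℝ → ℝ} {c : ℝ} (hc : 0 < c)
    (hF : ∀ x, AnalyticAt ℝ F x) (hF1 : deriv F 0 = -c)
    {φp : ℝ} (hφp_pos : 0 < φp) (hcrit : deriv F φp = 0)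
    (hfirst : ∀ s, 0 < s → s < φp → deriv F s ≠ 0)
    {a : ℕ} (ha : 2 ≤ a) (haeven : Even a)
    (hvan : ∀ m, 2 ≤ m → m < a → iteratedDeriv m F φp = 0)
    (hnz : iteratedDeriv a F φp ≠ 0) :
    ∃ δ > 0, ∀ s ∈ Set.Ioc φp (φp + δ), 0 < deriv F s := by
  have hFs : ContDiff ℝ ∞ F := by
    apply contDiff_iff_contDiffAt.2
    intro x
    exact (hF x).contDiffAt
  set g := deriv F with hgdef
  have hg : ContDiff ℝ ∞ g := by
    have := hFs.iterate_deriv 1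
    simpa using this
  have hgc : Continuous g := hg.continuous
  -- g is negative on (0, φp)
  have hneg : ∀ s, 0 < s → s < φp → g s < 0 := by
    intro s hs1 hs2
    rcases lt_or_ge (g s) 0 with h | h
    · exact h
    have hgs : 0 < g s := lt_of_le_of_ne h (Ne.symm (hfirst s hs1 hs2))
    have hiv := intermediate_value_Ioo hs1.le (hgc.continuousOn (s := Set.Icc 0 s))
    have h0 : (0:ℝ) ∈ Set.Ioo (g 0) (g s) := by
      constructor
      · rw [hF1]; linarith
      · exact hgs
    obtain ⟨t, ht, hgt⟩ := hiv h0
    exact (hfirst t ht.1 (lt_trans ht.2 hs2) hgt).elim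
  -- the a-th derivative of F
  set D := iteratedDeriv a F with hDdef
  have hDcont : Continuous D := hFs.continuous_iteratedDeriv a (by exact_mod_cast le_top)
  obtain ⟨n, hn⟩ : ∃ n, a = n + 2 := ⟨a - 2, by omega⟩
  -- vanishing of derivatives of g at φp up to order n
  have hvg : ∀ m, m ≤ n → iteratedDeriv m g φp = 0 := by
    intro m hm
    rcases Nat.eq_zero_or_pos m with rfl | hm0
    · simpa using hcrit
    · have h1 : iteratedDeriv m g φp = iteratedDeriv (m + 1) F φp := by
        rw [iteratedDeriv_succ']
      rw [h1]
      exact hvan (m + 1) (by omega) (by omega)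
  have hDg : iteratedDeriv (n + 1) g = D := by
    rw [hDdef, hn, ← iteratedDeriv_succ']
  -- continuity control
  have hDφp : D φp ≠ 0 := hnz
  have hcts : ContinuousAt D φp := hDcont.continuousAt
  rw [Metric.continuousAt_iff] at hcts
  obtain ⟨δ₀, hδ₀, hδ₀p⟩ := hcts |D φp| (abs_pos.2 hDφp)
  set δ := min δ₀ φp / 2 with hδdef
  have hδpos : 0 < δ := by positivity
  have hδlt : δ < δ₀ := by
    have : min δ₀ φp ≤ δ₀ := min_le_left _ _
    simp only [hδdef]; linarith
  have hδφp : δ < φp := by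
    have : min δ₀ φp ≤ φp := min_le_right _ _
    simp only [hδdef]; linarith
  have hsame : ∀ y, |y - φp| ≤ δ → ((0 < D φp → 0 < D y) ∧ (D φp < 0 → D y < 0)) := by
    intro y hy
    have := hδ₀p (show dist y φp < δ₀ by rw [Real.dist_eq]; linarith)
    rw [Real.dist_eq] at this
    constructor
    · intro hp
      have h2 : |D y - D φp| < D φp := by rwa [abs_of_pos hp] at this
      have h3 := abs_lt.1 h2
      linarith [h3.1]
    · intro hp
      have h2 : |D y - D φp| < -D φp := by rwa [abs_of_neg hp] at this
      have h3 := abs_lt.1 h2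
      linarith [h3.2]
  -- reflected function
  set gr := fun s => g (2 * φp - s) with hgrdef
  have hgr : ContDiff ℝ ∞ gr := hg.comp (contDiff_const.sub contDiff_id)
  have hgr_iter : ∀ (m : ℕ) (y : ℝ),
      iteratedDeriv m gr y = (-1 : ℝ) ^ m • iteratedDeriv m g (2 * φp - y) := by
    intro m y
    have h2 := iteratedDeriv_comp_neg m (fun u => g (2 * φp + u)) y
    beta_reduce at h2
    have h3 := congrFun (iteratedDeriv_comp_const_add m g (2 * φp)) (-y)
    beta_reduce at h3
    rw [h3] at h2
    have e1 : gr = fun x => g (2 * φp + -x) := by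
      funext s; simp [hgrdef, sub_eq_add_neg]
    rw [e1, h2, show 2 * φp + -y = 2 * φp - y from by ring]
  have hvgr : ∀ m, m ≤ n → iteratedDeriv m gr φp = 0 := by
    intro m hm
    rw [hgr_iter]
    rw [show 2 * φp - φp = φp from by ring, hvg m hm, smul_zero]
  -- positivity of D φp using the left side
  have hDφp_pos : 0 < D φp := by
    obtain ⟨ξ, hξ, hT⟩ := taylor_smooth hgr (show φp < φp + δ from by linarith) n hvgr
    have hgrval : gr (φp + δ) = g (φp - δ) := by simp [hgrdef]; ring_nf
    have hleft : g (φp - δ) < 0 := hneg _ (by linarith) (by linarith)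
    have hiter : iteratedDeriv (n + 1) gr ξ = -D (2 * φp - ξ) := by
      rw [hgr_iter, hDg]
      have hodd : Odd (n + 1) := by
        rcases haeven with ⟨k, hk⟩
        exact ⟨k - 1, by omega⟩
      rw [hodd.neg_one_pow]
      simp
    have hpow : 0 < (φp + δ - φp) ^ (n + 1) / (Nat.factorial (n + 1) : ℝ) := by
      have : (0:ℝ) < φp + δ - φp := by linarith
      positivity
    rw [hgrval] at hT
    rw [hiter] at hT
    have hDξ : 0 < D (2 * φp - ξ) := by
      by_contra hcon
      push_neg at hcon
      have h4 : 0 ≤ -D (2 * φp - ξ) * (φp + δ - φp) ^ (n + 1) / (Nat.factorial (n + 1) : ℝ) := by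
        apply div_nonneg
        · apply mul_nonneg (by linarith)
          have : (0:ℝ) < φp + δ - φp := by linarith
          positivity
        · positivity
      linarith
    have hdist : |2 * φp - ξ - φp| ≤ δ := by
      obtain ⟨h1, h2⟩ := hξ
      rw [abs_le]; constructor <;> [linarith; linarith]
    rcases lt_trichotomy (D φp) 0 with h | h | h
    · exact absurd ((hsame _ hdist).2 h) (by linarith)
    · exact absurd h hDφp
    · exact h
  -- conclusion
  refine ⟨δ, hδpos, ?_⟩
  intro s hs
  obtain ⟨hs1, hs2⟩ := hs
  obtain ⟨ξ, hξ, hT⟩ := taylor_smooth hg hs1 n hvg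
  have hdist : |ξ - φp| ≤ δ := by
    obtain ⟨h1, h2⟩ := hξ
    rw [abs_le]; constructor <;> [linarith; linarith]
  have hDξ : 0 < D ξ := (hsame _ hdist).1 hDφp_pos
  rw [hDg] at hT
  have hpow : 0 < (s - φp) ^ (n + 1) / (Nat.factorial (n + 1) : ℝ) := by
    have : (0:ℝ) < s - φp := by linarith
    positivity
  rw [hT]
  exact div_pos (mul_pos hDξ (pow_pos (by linarith : (0:ℝ) < s - φp) _)) (by positivity)

/-- Amplitude bound when `a` is even: if `φ̄₊ > 0` is the smallest positive critical point
of `F` and `a = min{n ≥ 2 : F⁽ⁿ⁾(φ̄₊) ≠ 0}` is even, then every continuous periodic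
zero-mean solution of `F(φ) = −K∗φ + B` is bounded above by `φ̄₊`. -/
theorem amplitude_bound_even (F : ℝ → ℝ) (c : ℝ) (hc : 0 < c)
    (hF : ∀ x, AnalyticAt ℝ F x) (hF0 : F 0 = 0) (hF1 : deriv F 0 = -c) (B : ℝ)
    (φp : ℝ) (hφp_pos : 0 < φp) (hcrit : deriv F φp = 0)
    (hfirst : ∀ s, 0 < s → s < φp → deriv F s ≠ 0)
    (a : ℕ) (ha : 2 ≤ a) (haeven : Even a)
    (hvan : ∀ m, 2 ≤ m → m < a → iteratedDeriv m F φp = 0)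
    (hnz : iteratedDeriv a F φp ≠ 0)
    (φ : ℝ → ℝ) (hφc : Continuous φ) (hφper : Function.Periodic φ (2 * π))
    (hφ0 : (∫ y in (-π)..π, φ y) = 0)
    (heq : ∀ x, F (φ x) = -(Kconv φ x) + B) :
    ∀ x, φ x ≤ φp := by
  have hπ := Real.pi_pos
  -- F is smooth
  have hFs : ContDiff ℝ ∞ F := contDiff_iff_contDiffAt.2 fun x => (hF x).contDiffAt
  -- δ from the sign lemma
  obtain ⟨δ, hδpos, hδ⟩ := deriv_F_pos_right hc hF hF1 hφp_pos hcrit hfirst ha haeven hvan hnz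
  -- F is strictly increasing on [φp, φp + δ]
  have hmono : StrictMonoOn F (Set.Icc φp (φp + δ)) := by
    apply strictMonoOn_of_deriv_pos (convex_Icc _ _) (hFs.continuous.continuousOn)
    intro s hs
    rw [interior_Icc] at hs
    exact hδ s ⟨hs.1, hs.2.le⟩
  -- main argument
  intro x0
  by_contra hgt
  push_neg at hgt
  -- a point where φ is nonpositive
  have hzero : ∃ z, φ z ≤ 0 := by
    by_contra h
    push_neg at h
    have hpos : 0 < ∫ y in (-π)..π, φ y :=
      intervalIntegral.intervalIntegral_pos_of_pos (hφc.intervalIntegrable _ _) h (by linarith)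
    linarith [hφ0 ▸ hpos]
  obtain ⟨z, hz⟩ := hzero
  -- translate z near x0
  set n : ℤ := ⌊(x0 - z) / (2 * π)⌋ with hndef
  set z1 : ℝ := z + (n : ℝ) * (2 * π) with hz1def
  have hφz1 : φ z1 = φ z := by
    have := hφper.sub_int_mul_eq (x := z1) n
    rw [hz1def] at this ⊢
    simpa using this.symm
  have hfl := Int.floor_le ((x0 - z) / (2 * π))
  have hfl2 := Int.lt_floor_add_one ((x0 - z) / (2 * π))
  have hz1le : z1 ≤ x0 := by
    rw [hz1def]
    have : (n : ℝ) * (2 * π) ≤ x0 - z := by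
      rw [hndef]
      calc (↑⌊(x0 - z) / (2 * π)⌋ : ℝ) * (2 * π) ≤ ((x0 - z) / (2 * π)) * (2 * π) := by
            apply mul_le_mul_of_nonneg_right hfl (by positivity)
        _ = x0 - z := by field_simp
    linarith
  set z2 : ℝ := z1 + 2 * π with hz2def
  have hx0z2 : x0 < z2 := by
    rw [hz2def, hz1def]
    have : x0 - z < ((n : ℝ) + 1) * (2 * π) := by
      rw [hndef]
      calc x0 - z = ((x0 - z) / (2 * π)) * (2 * π) := by field_simp
        _ < (↑⌊(x0 - z) / (2 * π)⌋ + 1) * (2 * π) := by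
            apply mul_lt_mul_of_pos_right hfl2 (by positivity)
    linarith
  have hφz2 : φ z2 = φ z := by
    rw [hz2def, hφper z1, hφz1]
  have hz1lt : z1 < x0 := by
    rcases eq_or_lt_of_le hz1le with h | h
    · exfalso
      have : φ x0 ≤ 0 := by rw [← h, hφz1]; exact hz
      linarith
    · exact h
  -- the set S1 and α
  set S1 : Set ℝ := Set.Icc z1 x0 ∩ {t | φ t = φp} with hS1def
  have hS1c : IsCompact S1 := isCompact_Icc.inter_right (isClosed_eq hφc continuous_const)
  have hS1ne : S1.Nonempty := by
    have hsub := intermediate_value_Icc hz1le hφc.continuousOn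
    have : φp ∈ Set.Icc (φ z1) (φ x0) := ⟨by rw [hφz1]; linarith, hgt.le⟩
    obtain ⟨t, ht, hφt⟩ := hsub this
    exact ⟨t, ht, hφt⟩
  set α := sSup S1 with hαdef
  have hαmem : α ∈ S1 := hS1c.sSup_mem hS1ne
  have hφα : φ α = φp := hαmem.2
  have hαx0 : α < x0 := by
    rcases eq_or_lt_of_le hαmem.1.2 with h | h
    · exfalso; rw [h] at hφα; linarith
    · exact h
  -- the set S2 and β
  set S2 : Set ℝ := Set.Icc x0 z2 ∩ {t | φ t = φp} with hS2def
  have hS2c : IsCompact S2 := isCompact_Icc.inter_right (isClosed_eq hφc continuous_const)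
  have hS2ne : S2.Nonempty := by
    have hsub := intermediate_value_Icc' hx0z2.le hφc.continuousOn
    have : φp ∈ Set.Icc (φ z2) (φ x0) := ⟨by rw [hφz2]; linarith, hgt.le⟩
    obtain ⟨t, ht, hφt⟩ := hsub this
    exact ⟨t, ht, hφt⟩
  set β := sInf S2 with hβdef
  have hβmem : β ∈ S2 := hS2c.sInf_mem hS2ne
  have hφβ : φ β = φp := hβmem.2
  have hx0β : x0 < β := by
    rcases eq_or_lt_of_le hβmem.1.1 with h | h
    · exfalso; rw [← h] at hφβ; linarith
    · exact h
  have hαβ : α < β := lt_trans hαx0 hx0β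
  -- φ > φp strictly inside (α, β)
  have hbetween : ∀ t, α < t → t < β → φp < φ t := by
    intro t hαt htβ
    by_contra hle
    push_neg at hle
    rcases le_total t x0 with htx | htx
    · have htx' : t < x0 := by
        rcases eq_or_lt_of_le htx with h | h
        · exfalso; rw [h] at hle; linarith
        · exact h
      obtain ⟨u, hu, hφu⟩ := intermediate_value_Icc htx hφc.continuousOn ⟨hle, hgt.le⟩
      have huS1 : u ∈ S1 := ⟨⟨le_trans (le_trans hαmem.1.1 hαt.le) hu.1, hu.2⟩, hφu⟩
      have := le_csSup hS1c.bddAbove huS1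
      linarith [hu.1]
    · have htx' : x0 < t := by
        rcases eq_or_lt_of_le htx with h | h
        · exfalso; rw [← h] at hle; linarith
        · exact h
      obtain ⟨u, hu, hφu⟩ := intermediate_value_Icc' htx hφc.continuousOn ⟨hle, hgt.le⟩
      have huS2 : u ∈ S2 := ⟨⟨hu.1, le_trans hu.2 (le_trans htβ.le hβmem.1.2)⟩, hφu⟩
      have := csInf_le hS2c.bddBelow huS2
      linarith [hu.2]
  -- the function W
  set W : ℝ → ℝ := fun x => -((1 / (4 * π)) * Pfun φ x) + B with hWdef
  have hWeq : ∀ x, F (φ x) = W x := by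
    intro x
    rw [heq x, Kconv_eq hφc hφper hφ0 x, hWdef]
  have hW1 : ∀ x, HasDerivAt W (-((1 / (4 * π)) * P1 φ x)) x := by
    intro x
    exact (((Pfun_hasDeriv hφc x).const_mul (1 / (4 * π))).neg).add_const B
  have hW2 : ∀ x, HasDerivAt (fun y => -((1 / (4 * π)) * P1 φ y)) (φ x) x := by
    intro x
    have h := ((P1_hasDeriv hφc hφper hφ0 x).const_mul (1 / (4 * π))).neg
    refine h.congr_deriv (Eq.symm ?_)
    field_simp
  have hder1 : deriv W = fun y => -((1 / (4 * π)) * P1 φ y) := funext fun x => (hW1 x).deriv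
  have hder2 : ∀ x, deriv (deriv W) x = φ x := by
    intro x
    rw [hder1]
    exact (hW2 x).deriv
  -- strict convexity of W on [α, β]
  have hconv : StrictConvexOn ℝ (Set.Icc α β) W := by
    apply strictConvexOn_of_deriv2_pos (convex_Icc α β)
      (fun x _ => ((hW1 x).differentiableAt.continuousAt).continuousWithinAt)
    intro x hx
    rw [interior_Icc] at hx
    have : deriv^[2] W x = deriv (deriv W) x := by
      rw [Function.iterate_succ, Function.iterate_one]; rfl
    rw [this, hder2]
    exact lt_trans hφp_pos (hbetween x hx.1 hx.2)
  -- pick a point x1 near α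
  have hcα : ContinuousAt φ α := hφc.continuousAt
  rw [Metric.continuousAt_iff] at hcα
  obtain ⟨η, hηpos, hη⟩ := hcα δ hδpos
  set x1 := min (α + η / 2) ((α + β) / 2) with hx1def
  have hx1α : α < x1 := by
    apply lt_min (by linarith) (by linarith)
  have hx1β : x1 < β := by
    apply lt_of_le_of_lt (min_le_right _ _) (by linarith)
  have hx1dist : |x1 - α| < η := by
    rw [abs_lt]
    constructor
    · linarith
    · have := min_le_left (α + η / 2) ((α + β) / 2)
      rw [hx1def]; linarith [this]
  have hφx1_lt : φ x1 < φp + δ := by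
    have := hη (show dist x1 α < η by rwa [Real.dist_eq])
    rw [Real.dist_eq, hφα] at this
    linarith [(abs_lt.1 this).2]
  have hφx1_gt : φp < φ x1 := hbetween x1 hx1α hx1β
  -- F (φ x1) > F φp by monotonicity
  have hFmono : F φp < F (φ x1) := by
    apply hmono (Set.left_mem_Icc.2 (by linarith)) ⟨hφx1_gt.le, hφx1_lt.le⟩ hφx1_gt
  -- convexity contradiction
  have hba : (0:ℝ) < β - α := by linarith
  set t : ℝ := (β - x1) / (β - α) with htdef
  set s : ℝ := (x1 - α) / (β - α) with hsdef
  have ht : 0 < t := div_pos (by linarith) hba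
  have hs : 0 < s := div_pos (by linarith) hba
  have hts : t + s = 1 := by
    rw [htdef, hsdef, ← add_div, div_eq_one_iff_eq (by linarith)]
    ring
  have hcomb : t • α + s • β = x1 := by
    rw [htdef, hsdef, smul_eq_mul, smul_eq_mul]
    field_simp
    ring
  have hlt := hconv.2 (Set.left_mem_Icc.2 hαβ.le) (Set.right_mem_Icc.2 hαβ.le)
    (ne_of_lt hαβ) ht hs hts
  rw [hcomb] at hlt
  have hWα : W α = F φp := by rw [← hWeq α, hφα]
  have hWβ : W β = F φp := by rw [← hWeq β, hφβ]
  rw [hWα, hWβ, smul_eq_mul, smul_eq_mul] at hlt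
  have : W x1 < F φp := by
    calc W x1 < t * F φp + s * F φp := hlt
      _ = F φp := by rw [← add_mul, hts, one_mul]
  rw [← hWeq x1] at this
  linarith
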